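/- arXiv:2010.13656 — 5 statements merged into one kernel-verified Lean document; each statement's English description precedes it below -/
import Mathlib

section
/- Let Λ be a commutative ring and f ∈ Λ⟦x₁,…,xₙ⟧ a non-zero formal power series in n variables. Then there exist positive integers u₁,…,u_{n-1} such that the one-variable power series f(x^{u₁},…,x^{u_{n-1}}, x) ∈ Λ⟦x⟧ is non-zero. -/
open scoped BigOperators

/-- The one-variable power series `f(x^{u₀}, …, x^{u_{n-1}}, x)` obtained from a power series
`f ∈ Λ⟦x₀,…,xₙ⟧` in `n+1` variables by substituting `x^{u i}` for the `i`-th variable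
(`i < n`) and `x` for the last variable.  Its `m`-th coefficient is the (finite, when all
`u i > 0`) sum of the coefficients of `f` at the multi-indices `e` of weighted degree
`∑ i, u i * e i + e n = m`. -/
noncomputable def substMonomialPowers {Λ : Type*} [CommRing Λ] {n : ℕ} (u : Fin n → ℕ)
    (f : MvPowerSeries (Fin (n + 1)) Λ) : PowerSeries Λ :=
  PowerSeries.mk fun m =>
    ∑ᶠ (e : Fin (n + 1) →₀ ℕ)
      (_ : (∑ i : Fin n, u i * e i.castSucc) + e (Fin.last n) = m),
      MvPowerSeries.coeff e f

/-- (Bourbaki)  If `f ∈ Λ⟦x₀,…,xₙ⟧` is a non-zero power series with coefficients in a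
commutative ring `Λ`, then there exist positive integers `u₀, …, u_{n-1}` such that the
one-variable power series `f(x^{u₀}, …, x^{u_{n-1}}, x) ∈ Λ⟦x⟧` is non-zero. -/
theorem exists_substMonomialPowers_ne_zero {Λ : Type*} [CommRing Λ] {n : ℕ}
    (f : MvPowerSeries (Fin (n + 1)) Λ) (hf : f ≠ 0) :
    ∃ u : Fin n → ℕ, (∀ i, 0 < u i) ∧ substMonomialPowers u f ≠ 0 := by
  classical
  -- the support of `f` is nonempty
  have hS : ∃ e : Fin (n + 1) →₀ ℕ, MvPowerSeries.coeff e f ≠ 0 := by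
    by_contra h
    push_neg at h
    exact hf (MvPowerSeries.ext fun e => by simp [h e])
  -- pick the lex-minimal multi-index in the support
  set T : Set (Lex (Fin (n + 1) →₀ ℕ)) :=
    {e | MvPowerSeries.coeff (ofLex e) f ≠ 0} with hTdef
  have hT : T.Nonempty := by
    obtain ⟨e, he⟩ := hS
    exact ⟨toLex e, he⟩
  obtain ⟨ε, hεT, hmin⟩ := (wellFounded_lt (α := Lex (Fin (n + 1) →₀ ℕ))).has_min T hT
  set e₀ : Fin (n + 1) →₀ ℕ := ofLex ε with he₀
  -- the base
  set b : ℕ := 1 + ∑ j : Fin (n + 1), e₀ j with hb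
  have hb1 : 1 ≤ b := Nat.le_add_right 1 _
  -- weighted degree
  set W : (Fin (n + 1) →₀ ℕ) → ℕ := fun e => ∑ j : Fin (n + 1), b ^ (n - j.val) * e j
    with hWdef
  set u : Fin n → ℕ := fun i => b ^ (n - i.val) with hu
  have hupos : ∀ i, 0 < u i := fun i => Nat.pow_pos hb1
  -- the weighted degree matches the substitution condition
  have hW : ∀ e : Fin (n + 1) →₀ ℕ,
      (∑ i : Fin n, u i * e i.castSucc) + e (Fin.last n) = W e := by
    intro e
    rw [hWdef]
    dsimp only
    rw [Fin.sum_univ_castSucc (f := fun j : Fin (n + 1) => b ^ (n - j.val) * e j)]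
    simp [hu, Fin.last]
  -- key monotonicity : lex-bigger indices have strictly bigger weighted degree
  have key : ∀ e : Fin (n + 1) →₀ ℕ, toLex e₀ < toLex e → W e₀ < W e := by
    intro e hlt
    rw [Finsupp.Lex.lt_iff] at hlt
    obtain ⟨j, hj, hjlt⟩ := hlt
    simp only [ofLex_toLex] at hj hjlt
    have hcompl : (Finset.Iic j)ᶜ = Finset.Ioi j := by
      ext x; simp [not_le]
    have split : ∀ v : Fin (n + 1) →₀ ℕ,
        W v = ∑ i ∈ Finset.Iio j, b ^ (n - i.val) * v i + b ^ (n - j.val) * v j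
          + ∑ i ∈ Finset.Ioi j, b ^ (n - i.val) * v i := by
      intro v
      rw [hWdef]
      dsimp only
      rw [← Finset.sum_add_sum_compl (Finset.Iic j), hcompl,
        ← Finset.Iio_insert, Finset.sum_insert (by simp)]
      ring
    have hIio : ∑ i ∈ Finset.Iio j, b ^ (n - i.val) * e₀ i
        = ∑ i ∈ Finset.Iio j, b ^ (n - i.val) * e i := by
      refine Finset.sum_congr rfl fun i hi => ?_
      rw [hj i (Finset.mem_Iio.mp hi)]
    have htail : ∑ i ∈ Finset.Ioi j, b ^ (n - i.val) * e₀ i < b ^ (n - j.val) := by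
      by_cases hjl : j = Fin.last n
      · have : Finset.Ioi j = ∅ := by
          ext x
          simp only [Finset.mem_Ioi, Finset.notMem_empty, iff_false, not_lt, hjl]
          exact Fin.le_last x
        rw [this]
        simpa using Nat.pow_pos (n := n - j.val) hb1
      · have hjn : j.val < n := by
          have h1 := j.isLt
          have h2 : j.val ≠ n := fun h => hjl (Fin.ext h)
          omega
        have step1 : ∑ i ∈ Finset.Ioi j, b ^ (n - i.val) * e₀ i
            ≤ b ^ (n - j.val - 1) * ∑ i ∈ Finset.Ioi j, e₀ i := by
          rw [Finset.mul_sum]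
          refine Finset.sum_le_sum fun i hi => ?_
          have hij : j < i := Finset.mem_Ioi.mp hi
          have : n - i.val ≤ n - j.val - 1 := by
            have : j.val < i.val := hij
            omega
          exact Nat.mul_le_mul_right _ (Nat.pow_le_pow_right hb1 this)
        have step2 : ∑ i ∈ Finset.Ioi j, e₀ i < b := by
          have : ∑ i ∈ Finset.Ioi j, e₀ i ≤ ∑ i : Fin (n + 1), e₀ i :=
            Finset.sum_le_sum_of_subset (Finset.subset_univ _)
          omega
        calc ∑ i ∈ Finset.Ioi j, b ^ (n - i.val) * e₀ i
            ≤ b ^ (n - j.val - 1) * ∑ i ∈ Finset.Ioi j, e₀ i := step1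
          _ < b ^ (n - j.val - 1) * b := by
              exact mul_lt_mul_of_pos_left step2 (Nat.pow_pos (n := n - j.val - 1) hb1)
          _ = b ^ (n - j.val) := by
              rw [← pow_succ]
              congr 1
              omega
    have hjterm : b ^ (n - j.val) * e₀ j + b ^ (n - j.val) ≤ b ^ (n - j.val) * e j := by
      have : e₀ j + 1 ≤ e j := hjlt
      calc b ^ (n - j.val) * e₀ j + b ^ (n - j.val)
          = b ^ (n - j.val) * (e₀ j + 1) := by ring
        _ ≤ b ^ (n - j.val) * e j := Nat.mul_le_mul_left _ this
    rw [split e₀, split e, hIio]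
    have : (0:ℕ) ≤ ∑ i ∈ Finset.Ioi j, b ^ (n - i.val) * e i := Nat.zero_le _
    omega
  -- e₀ is lex-minimal on the support
  have hmin' : ∀ e : Fin (n + 1) →₀ ℕ, MvPowerSeries.coeff e f ≠ 0 → e ≠ e₀ →
      toLex e₀ < toLex e := by
    intro e he hne
    have h1 : ¬ toLex e < toLex e₀ := hmin (toLex e) he
    have h2 : toLex e₀ ≠ toLex e := fun h => hne (by simpa using h.symm)
    exact lt_of_le_of_ne (not_lt.mp h1) h2
  refine ⟨u, hupos, ?_⟩
  set m : ℕ := W e₀ with hm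
  have hcoeff : PowerSeries.coeff m (substMonomialPowers u f)
      = MvPowerSeries.coeff e₀ f := by
    rw [substMonomialPowers, PowerSeries.coeff_mk]
    have h1 : ∀ e : Fin (n + 1) →₀ ℕ,
        (∑ᶠ (_ : (∑ i : Fin n, u i * e i.castSucc) + e (Fin.last n) = m),
          MvPowerSeries.coeff e f)
        = if W e = m then MvPowerSeries.coeff e f else 0 := by
      intro e
      rw [hW e, finsum_eq_if]
    rw [finsum_congr h1, finsum_eq_single _ e₀ ?_]
    · rw [if_pos rfl]
    · intro e hne
      by_cases hce : MvPowerSeries.coeff e f = 0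
      · simp [hce]
      · rw [if_neg (key e (hmin' e hce hne)).ne']
  intro h0
  rw [h0, map_zero] at hcoeff
  exact hεT hcoeff.symm
end

section
/- Let (Λ, 𝔪) be a Noetherian complete local domain admitting a non-trivial valuation ν : Λ → ℕ ∪ {∞} compatible with the 𝔪-adic topology. If f ∈ Λ⟦x₁,…,xₙ⟧ satisfies f(a₁,…,aₙ) = 0 for all a₁,…,aₙ ∈ 𝔪, then f = 0. -/
open scoped BigOperators

/-- A non-trivial valuation on a commutative ring. -/
def IsNontrivialValuation {Λ : Type*} [CommRing Λ] (ν : Λ → ℕ∞) : Prop :=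
  (∀ a b : Λ, ν (a * b) = ν a + ν b) ∧
  (∀ a b : Λ, min (ν a) (ν b) ≤ ν (a + b)) ∧
  (∀ a : Λ, ν a = ⊤ ↔ a = 0) ∧
  (∃ a : Λ, ν a ≠ 0 ∧ ν a ≠ ⊤)

/-- `ν` is compatible with the `I`-adic topology: the filtration `{a | ν a ≥ n}` and the
filtration by powers of `I` are interleaved, i.e. induce the same linear topology. -/
def CompatibleWithAdic {Λ : Type*} [CommRing Λ] (I : Ideal Λ) (ν : Λ → ℕ∞) : Prop :=
  (∀ n : ℕ, ∃ m : ℕ, ∀ a ∈ I ^ m, (n : ℕ∞) ≤ ν a) ∧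
  (∀ n : ℕ, ∃ m : ℕ, ∀ a : Λ, (m : ℕ∞) ≤ ν a → a ∈ I ^ n)

/-- The partial sum of the evaluation of a power series `f ∈ Λ⟦x₁,…,xₙ⟧` at the tuple `a`,
over all multi-indices `e` with `e i ≤ ℓ` for all `i`. -/
noncomputable def partialEval {Λ : Type*} [CommRing Λ] {n : ℕ}
    (f : MvPowerSeries (Fin n) Λ) (a : Fin n → Λ) (ℓ : ℕ) : Λ :=
  ∑ e ∈ Finset.Iic (Finsupp.equivFunOnFinite.symm fun _ : Fin n => ℓ),
    MvPowerSeries.coeff e f * ∏ i, a i ^ e i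

/-- For `a` a tuple of elements of the maximal ideal `𝔪` of an `𝔪`-adically complete local ring,
`f(a) = 0` holds if and only if all partial sums of the evaluation lie in the corresponding
powers of `𝔪`; this is the statement `EvaluatesToZero f a`. -/
def EvaluatesToZero {Λ : Type*} [CommRing Λ] [IsLocalRing Λ] {n : ℕ}
    (f : MvPowerSeries (Fin n) Λ) (a : Fin n → Λ) : Prop :=
  ∀ ℓ : ℕ, partialEval f a ℓ ∈ (IsLocalRing.maximalIdeal Λ) ^ ℓ

section NuAux
variable {Λ : Type*} [CommRing Λ] [Nontrivial Λ] (ν : Λ → ℕ∞)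
  (hmul : ∀ a b : Λ, ν (a * b) = ν a + ν b)
  (hmin : ∀ a b : Λ, min (ν a) (ν b) ≤ ν (a + b))
  (htop : ∀ a : Λ, ν a = ⊤ ↔ a = 0)

include hmul htop in
lemma nu_one : ν 1 = 0 := by
  have h := hmul 1 1
  rw [one_mul] at h
  have ht : ν 1 ≠ ⊤ := fun hh => one_ne_zero ((htop 1).1 hh)
  obtain ⟨m, hm⟩ := WithTop.ne_top_iff_exists.mp ht
  rw [← hm] at h
  have h2 : (m : ℕ∞) = ((m + m : ℕ) : ℕ∞) := by push_cast; exact h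
  have h3 : m = m + m := by exact_mod_cast h2
  have h4 : m = 0 := by omega
  rw [← hm, h4]; rfl

include hmul htop in
lemma nu_neg (a : Λ) : ν (-a) = ν a := by
  have h1 : ν (-1 : Λ) = 0 := by
    have h := hmul (-1) (-1)
    rw [neg_one_mul, neg_neg, nu_one ν hmul htop] at h
    exact (add_eq_zero.mp h.symm).1
  calc ν (-a) = ν ((-1) * a) := by rw [neg_one_mul]
  _ = ν a := by rw [hmul, h1, zero_add]

include hmul hmin htop in
lemma nu_add_left {a b : Λ} (h : ν a < ν b) : ν (a + b) = ν a := by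
  refine le_antisymm ?_ ?_
  · by_contra hc
    push_neg at hc
    have h2 : min (ν (a + b)) (ν (-b)) ≤ ν ((a + b) + (-b)) := hmin _ _
    rw [add_neg_cancel_right, nu_neg ν hmul htop] at h2
    exact absurd h2 (not_le.mpr (lt_min hc h))
  · calc ν a = min (ν a) (ν b) := (min_eq_left h.le).symm
    _ ≤ ν (a + b) := hmin a b

omit [Nontrivial Λ] in
include hmin htop in
lemma nu_lt_sum {ι : Type*} (s : Finset ι) (g : ι → Λ) (W : ℕ∞) (hW : W ≠ ⊤)
    (h : ∀ e ∈ s, W < ν (g e)) : W < ν (∑ e ∈ s, g e) := by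
  classical
  induction s using Finset.induction_on with
  | empty => simp only [Finset.sum_empty]; rw [(htop 0).2 rfl]; exact lt_top_iff_ne_top.mpr hW
  | @insert x s hx ih =>
    rw [Finset.sum_insert hx]
    exact lt_of_lt_of_le
      (lt_min (h x (Finset.mem_insert_self x s))
        (ih fun e he => h e (Finset.mem_insert_of_mem he)))
      (hmin _ _)

include hmul hmin htop in
lemma nu_sum_eq {ι : Type*} (s : Finset ι) (g : ι → Λ) (e₀ : ι) (he₀ : e₀ ∈ s)
    (hne : ν (g e₀) ≠ ⊤) (h : ∀ e ∈ s, e ≠ e₀ → ν (g e₀) < ν (g e)) :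
    ν (∑ e ∈ s, g e) = ν (g e₀) := by
  classical
  rw [← Finset.add_sum_erase s g he₀]
  exact nu_add_left ν hmul hmin htop
    (nu_lt_sum ν hmin htop _ g _ hne fun e he =>
      h e (Finset.mem_of_mem_erase he) (Finset.ne_of_mem_erase he))

include hmul htop in
lemma nu_pow (t : Λ) (m : ℕ) : ν (t ^ m) = (m : ℕ∞) * ν t := by
  induction m with
  | zero => simp [nu_one ν hmul htop]
  | succ m ih =>
    rw [pow_succ, hmul, ih]
    push_cast
    ring

end NuAux

lemma digitsInj : ∀ (n M : ℕ) (g h : Fin n → ℕ), (∀ i, g i < M) → (∀ i, h i < M) →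
    (∑ i, g i * M ^ (i : ℕ)) = (∑ i, h i * M ^ (i : ℕ)) → g = h := by
  intro n
  induction n with
  | zero => intro M g h _ _ _; funext i; exact i.elim0
  | succ n ih =>
    intro M g h hg hh heq
    have hM : 0 < M := lt_of_le_of_lt (Nat.zero_le _) (hg 0)
    have expand : ∀ u : Fin (n+1) → ℕ,
        (∑ i, u i * M ^ (i : ℕ)) = u 0 + (∑ i : Fin n, u i.succ * M ^ (i : ℕ)) * M := by
      intro u
      rw [Fin.sum_univ_succ, Finset.sum_mul]
      simp only [Fin.val_zero, pow_zero, mul_one, Fin.val_succ, pow_succ]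
      congr 1
      apply Finset.sum_congr rfl
      intro i _
      ring
    rw [expand g, expand h] at heq
    have h0 : g 0 = h 0 := by
      have := congrArg (· % M) heq
      simpa [Nat.add_mul_mod_self_right, Nat.mod_eq_of_lt (hg 0), Nat.mod_eq_of_lt (hh 0)]
        using this
    have htail : (∑ i : Fin n, g i.succ * M ^ (i : ℕ)) = ∑ i : Fin n, h i.succ * M ^ (i : ℕ) := by
      rw [h0] at heq
      exact Nat.eq_of_mul_eq_mul_right hM (Nat.add_left_cancel heq)
    have hfun := ih M (fun i => g i.succ) (fun i => h i.succ) (fun i => hg _) (fun i => hh _) htail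
    funext i
    induction i using Fin.cases with
    | zero => exact h0
    | succ j => exact congrFun hfun j

/-- Let `(Λ, 𝔪)` be a Noetherian complete local domain admitting a non-trivial valuation
compatible with the `𝔪`-adic topology.  If `f ∈ Λ⟦x₁,…,xₙ⟧` satisfies `f(a₁,…,aₙ) = 0` for
all `a₁,…,aₙ ∈ 𝔪`, then `f = 0`. -/
theorem mvPowerSeries_eq_zero_of_forall_eval_zero {Λ : Type*} [CommRing Λ] [IsDomain Λ]
    [IsNoetherianRing Λ] [IsLocalRing Λ]
    (hcomplete : IsAdicComplete (IsLocalRing.maximalIdeal Λ) Λ)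
    (ν : Λ → ℕ∞) (hν : IsNontrivialValuation ν)
    (hcompat : CompatibleWithAdic (IsLocalRing.maximalIdeal Λ) ν)
    {n : ℕ} (f : MvPowerSeries (Fin n) Λ)
    (hf : ∀ a : Fin n → Λ, (∀ i, a i ∈ IsLocalRing.maximalIdeal Λ) → EvaluatesToZero f a) :
    f = 0 := by
  classical
  by_contra hf0
  obtain ⟨hmul, hmin, htop, t₀, ht₀0, ht₀top⟩ := hν
  obtain ⟨hc1, hc2⟩ := hcompat
  have hex : ∃ d : ℕ, ∃ e : Fin n →₀ ℕ, (∑ i, e i) = d ∧ MvPowerSeries.coeff e f ≠ 0 := by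
    by_contra h
    push_neg at h
    apply hf0
    apply MvPowerSeries.ext
    intro e
    rw [map_zero]
    exact h _ e rfl
  set d := Nat.find hex with hd_def
  obtain ⟨e₂, he₂d, he₂0⟩ := Nat.find_spec hex
  have hdmin : ∀ e : Fin n →₀ ℕ, MvPowerSeries.coeff e f ≠ 0 → d ≤ ∑ i, e i :=
    fun e he => Nat.find_min' hex ⟨e, rfl, he⟩
  -- construct t ∈ 𝔪 with 0 < ν t = c < ⊤
  obtain ⟨m₁, hm₁⟩ := hc2 1
  obtain ⟨c₀, hc₀⟩ := WithTop.ne_top_iff_exists.mp ht₀top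
  have hc₀pos : 1 ≤ c₀ := by
    rcases Nat.eq_zero_or_pos c₀ with h | h
    · exact absurd (by rw [← hc₀, h]; rfl) ht₀0
    · exact h
  set t : Λ := t₀ ^ (m₁ + 1) with ht_def
  set c : ℕ := (m₁ + 1) * c₀ with hc_def
  have hνt : ν t = (c : ℕ∞) := by
    rw [ht_def, nu_pow ν hmul htop, ← hc₀, hc_def]; push_cast; rfl
  have hcpos : 1 ≤ c := Nat.mul_pos (Nat.succ_pos m₁) hc₀pos
  have ht_mem : t ∈ IsLocalRing.maximalIdeal Λ := by
    have h1 : m₁ ≤ c := by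
      calc m₁ ≤ (m₁ + 1) * 1 := by omega
      _ ≤ c := by rw [hc_def]; exact Nat.mul_le_mul_left _ hc₀pos
    have h2 : ((m₁ : ℕ∞)) ≤ ν t := by rw [hνt]; exact_mod_cast h1
    simpa using hm₁ t h2
  -- the finite set of minimal-degree indices
  set M : ℕ := d + 1 with hM_def
  have hmemIic : ∀ (e : Fin n →₀ ℕ) (ℓ : ℕ),
      e ∈ Finset.Iic (Finsupp.equivFunOnFinite.symm fun _ : Fin n => ℓ) ↔ ∀ i, e i ≤ ℓ := by
    intro e ℓ
    rw [Finset.mem_Iic, Finsupp.le_def]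
    simp
  set F : Finset (Fin n →₀ ℕ) :=
    (Finset.Iic (Finsupp.equivFunOnFinite.symm fun _ : Fin n => d)).filter
      (fun e => (∑ i, e i) = d ∧ MvPowerSeries.coeff e f ≠ 0) with hF_def
  have hmemF : ∀ e : Fin n →₀ ℕ, (∑ i, e i) = d → MvPowerSeries.coeff e f ≠ 0 → e ∈ F := by
    intro e h1 h2
    rw [hF_def, Finset.mem_filter]
    refine ⟨(hmemIic e d).2 ?_, h1, h2⟩
    intro i
    calc e i ≤ ∑ j, e j := Finset.single_le_sum (fun _ _ => Nat.zero_le _) (Finset.mem_univ i)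
    _ = d := h1
  obtain ⟨estar, hestarF, hLmin⟩ :=
    Finset.exists_min_image F (fun e => ∑ i, e i * M ^ (i : ℕ)) ⟨e₂, hmemF e₂ he₂d he₂0⟩
  rw [hF_def, Finset.mem_filter] at hestarF
  obtain ⟨-, hestar_d, hestar_ne⟩ := hestarF
  -- the valuation of the minimal coefficient
  have hνstar_ne : ν (MvPowerSeries.coeff estar f) ≠ ⊤ := fun h => hestar_ne ((htop _).1 h)
  obtain ⟨V, hV⟩ := WithTop.ne_top_iff_exists.mp hνstar_ne
  set k : ℕ := V + 1 with hk_def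
  set A : ℕ := d * M ^ n + 1 with hA_def
  set N : Fin n → ℕ := fun i => k * (A + M ^ (i : ℕ)) with hN_def
  set a : Fin n → Λ := fun i => t ^ N i with ha_def
  have haMem : ∀ i, a i ∈ IsLocalRing.maximalIdeal Λ := by
    intro i
    apply Ideal.pow_mem_of_mem _ ht_mem
    show 0 < k * (A + M ^ (i : ℕ))
    exact Nat.mul_pos (by omega) (by omega)
  set L : (Fin n →₀ ℕ) → ℕ := fun e => ∑ i, e i * M ^ (i : ℕ) with hL_def
  set T : (Fin n →₀ ℕ) → ℕ := fun e => ∑ i, e i * N i with hT_def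
  have hT_eq : ∀ e : Fin n →₀ ℕ, T e = k * ((∑ i, e i) * A + L e) := by
    intro e
    calc T e = ∑ i, (k * (e i * A) + k * (e i * M ^ (i : ℕ))) := by
          apply Finset.sum_congr rfl
          intro i _
          rw [hN_def]
          ring
    _ = k * ((∑ i, e i) * A + L e) := by
          rw [Finset.sum_add_distrib, ← Finset.mul_sum, ← Finset.mul_sum, ← mul_add,
            hL_def, Finset.sum_mul]
  have hLbound : L estar ≤ d * M ^ n := by
    calc L estar ≤ ∑ i, estar i * M ^ n := by
          apply Finset.sum_le_sum
          intro i _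
          exact Nat.mul_le_mul_left _ (Nat.pow_le_pow_right (by omega) i.2.le)
    _ = d * M ^ n := by rw [← Finset.sum_mul, hestar_d]
  -- key combinatorial inequality
  have hkey : ∀ e : Fin n →₀ ℕ, MvPowerSeries.coeff e f ≠ 0 → e ≠ estar →
      T estar + k ≤ T e := by
    intro e hce hne
    rw [hT_eq, hT_eq, hestar_d]
    have main : d * A + L estar + 1 ≤ (∑ i, e i) * A + L e := by
      rcases Nat.lt_or_ge (∑ i, e i) (d + 1) with hlt | hge
      · have hed : (∑ i, e i) = d := le_antisymm (by omega) (hdmin e hce)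
        have hLe : L estar ≤ L e := hLmin e (hmemF e hed hce)
        have hLne : L e ≠ L estar := by
          intro hLeq
          apply hne
          have hbound : ∀ i, e i < M := by
            intro i
            have : e i ≤ ∑ j, e j :=
              Finset.single_le_sum (fun _ _ => Nat.zero_le _) (Finset.mem_univ i)
            omega
          have hbound' : ∀ i, estar i < M := by
            intro i
            have : estar i ≤ ∑ j, estar j :=
              Finset.single_le_sum (fun _ _ => Nat.zero_le _) (Finset.mem_univ i)
            omega
          have := digitsInj n M (fun i => e i) (fun i => estar i) hbound hbound' hLeq
          exact Finsupp.ext (fun i => congrFun this i)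
        rw [hed]
        omega
      · have hA1 : L estar + 1 ≤ A := by rw [hA_def]; omega
        calc d * A + L estar + 1 ≤ d * A + A := by omega
        _ = (d + 1) * A := by ring
        _ ≤ (∑ i, e i) * A := Nat.mul_le_mul_right _ hge
        _ ≤ (∑ i, e i) * A + L e := Nat.le_add_right _ _
    calc k * (d * A + L estar) + k = k * (d * A + L estar + 1) := by ring
    _ ≤ k * ((∑ i, e i) * A + L e) := Nat.mul_le_mul_left _ main
  -- product formula
  have hprod : ∀ e : Fin n →₀ ℕ, (∏ i, a i ^ e i) = t ^ T e := by
    intro e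
    calc ∏ i, a i ^ e i = ∏ i, t ^ (e i * N i) := by
          apply Finset.prod_congr rfl
          intro i _
          rw [ha_def, ← pow_mul, Nat.mul_comm]
    _ = t ^ T e := Finset.prod_pow_eq_pow_sum _ _ _
  -- valuation of the partial sums
  set W : ℕ := V + T estar * c with hW_def
  obtain ⟨m₀, hm₀⟩ := hc1 (W + 1)
  set ℓ : ℕ := max d m₀ with hℓ_def
  set g : (Fin n →₀ ℕ) → Λ := fun e => MvPowerSeries.coeff e f * ∏ i, a i ^ e i with hg_def
  have hPE : partialEval f a ℓ
      = ∑ e ∈ Finset.Iic (Finsupp.equivFunOnFinite.symm fun _ : Fin n => ℓ), g e := rfl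
  have hstar_mem : estar ∈ Finset.Iic (Finsupp.equivFunOnFinite.symm fun _ : Fin n => ℓ) := by
    rw [hmemIic]
    intro i
    calc estar i ≤ ∑ j, estar j :=
          Finset.single_le_sum (fun _ _ => Nat.zero_le _) (Finset.mem_univ i)
    _ = d := hestar_d
    _ ≤ ℓ := le_max_left _ _
  have hterm_star : ν (g estar) = (W : ℕ∞) := by
    rw [hg_def]
    simp only
    rw [hprod, hmul, nu_pow ν hmul htop, ← hV, hνt, hW_def]
    push_cast
    rfl
  have hval : ν (partialEval f a ℓ) = (W : ℕ∞) := by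
    rw [hPE, nu_sum_eq ν hmul hmin htop _ g estar hstar_mem
      (by rw [hterm_star]; exact WithTop.coe_ne_top) ?_, hterm_star]
    intro e he hne
    rw [hterm_star, hg_def]
    simp only
    by_cases hce : MvPowerSeries.coeff e f = 0
    · rw [hce, zero_mul, (htop 0).2 rfl]
      exact WithTop.coe_lt_top W
    · rw [hprod, hmul, nu_pow ν hmul htop, hνt]
      have h1 : W + 1 ≤ T e * c := by
        have h2 := hkey e hce hne
        have h3 : V + 1 ≤ k * c := by
          have : k * 1 ≤ k * c := Nat.mul_le_mul_left _ hcpos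
          omega
        calc W + 1 = T estar * c + (V + 1) := by rw [hW_def]; ring
        _ ≤ T estar * c + k * c := by omega
        _ = (T estar + k) * c := by ring
        _ ≤ T e * c := Nat.mul_le_mul_right _ h2
      calc (W : ℕ∞) < ((W + 1 : ℕ) : ℕ∞) := by exact_mod_cast Nat.lt_succ_self W
      _ ≤ ((T e * c : ℕ) : ℕ∞) := by exact_mod_cast h1
      _ ≤ ν (MvPowerSeries.coeff e f) + (T e : ℕ∞) * (c : ℕ∞) := by
            push_cast
            exact le_add_self
  have hfin := hm₀ (partialEval f a ℓ)
    (Ideal.pow_le_pow_right (le_max_right d m₀) (hf a haMem ℓ))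
  rw [hval] at hfin
  have : W + 1 ≤ W := by exact_mod_cast hfin
  omega
end

section
/- Let (Λ, 𝔪) be a Noetherian complete local domain with a non-trivial valuation compatible with the 𝔪-adic topology. Let g = Σ_{i≥0} b_i x^i ∈ Λ⟦x⟧ be nonzero, let d be the least index with b_d ≠ 0, and let a ∈ 𝔪 ∖ {0} with ν(a) > ν(b_d). Then ν(g(a)) = ν(b_d a^d), and in particular g(a) ≠ 0. -/
open scoped BigOperators

/-- `x` is the value `g(a) = Σ_i b_i a^i` of the power series `g` at `a ∈ 𝔪`: the partial
sums converge `𝔪`-adically to `x`.  (In an `𝔪`-adically complete and separated ring this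
determines `x` uniquely.) -/
def IsEvalAt {Λ : Type*} [CommRing Λ] [IsLocalRing Λ] (g : PowerSeries Λ) (a : Λ) (x : Λ) :
    Prop :=
  ∀ ℓ : ℕ, x - ∑ i ∈ Finset.range ℓ, PowerSeries.coeff i g * a ^ i
    ∈ (IsLocalRing.maximalIdeal Λ) ^ ℓ

/-- Let `(Λ, 𝔪)` be a Noetherian complete local domain with a non-trivial valuation `ν`
compatible with the `𝔪`-adic topology.  Let `g = Σ_{i ≥ 0} b_i x^i ∈ Λ⟦x⟧` be non-zero, let
`d` be the least index with `b_d ≠ 0`, and let `a ∈ 𝔪 ∖ {0}` with `ν a > ν (b_d)`.  Then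
`ν (g(a)) = ν (b_d * a^d)`; in particular `g(a) ≠ 0`. -/
theorem nu_eval_eq_nu_leading {Λ : Type*} [CommRing Λ] [IsDomain Λ]
    [IsNoetherianRing Λ] [IsLocalRing Λ]
    (hcomplete : IsAdicComplete (IsLocalRing.maximalIdeal Λ) Λ)
    (ν : Λ → ℕ∞) (hν : IsNontrivialValuation ν)
    (hcompat : CompatibleWithAdic (IsLocalRing.maximalIdeal Λ) ν)
    (g : PowerSeries Λ) (d : ℕ)
    (hd : PowerSeries.coeff d g ≠ 0) (hdmin : ∀ i < d, PowerSeries.coeff i g = 0)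
    (a : Λ) (ha : a ∈ IsLocalRing.maximalIdeal Λ) (ha0 : a ≠ 0)
    (hva : ν (PowerSeries.coeff d g) < ν a)
    (x : Λ) (hx : IsEvalAt g a x) :
    ν x = ν (PowerSeries.coeff d g * a ^ d) ∧ x ≠ 0 := by

  obtain ⟨hmul, hadd, htop, -⟩ := hν
  set b : ℕ → Λ := fun i => PowerSeries.coeff i g with hb
  -- ν 1 = 0
  have hν1 : ν 1 = 0 := by
    have h := hmul 1 1
    rw [mul_one] at h
    rcases eq_or_ne (ν 1) ⊤ with h1 | h1
    · exact absurd ((htop 1).mp h1) one_ne_zero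
    · lift ν (1 : Λ) to ℕ using h1 with n hn
      have : n = n + n := by exact_mod_cast h
      have : n = 0 := by omega
      exact_mod_cast this
  have hνneg : ∀ y : Λ, ν (-y) = ν y := by
    have hm1 : ν (-1 : Λ) = 0 := by
      have h := hmul (-1 : Λ) (-1)
      rw [neg_mul_neg, one_mul, hν1] at h
      exact (add_eq_zero.mp h.symm).1
    intro y
    have h := hmul (-1 : Λ) y
    rw [neg_one_mul, hm1, zero_add] at h
    exact h
  -- sum lemma
  have hsum : ∀ (s : Finset ℕ) (f : ℕ → Λ) (c : ℕ∞), c ≠ ⊤ →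
      (∀ i ∈ s, c < ν (f i)) → c < ν (∑ i ∈ s, f i) := by
    intro s f c hc h
    induction s using Finset.induction with
    | empty =>
        simp only [Finset.sum_empty]
        rw [(htop 0).mpr rfl]
        exact lt_top_iff_ne_top.mpr hc
    | @insert j s' hnotmem ih =>
        rw [Finset.sum_insert hnotmem]
        have h1 := hadd (f j) (∑ i ∈ s', f i)
        have h2 : c < min (ν (f j)) (ν (∑ i ∈ s', f i)) :=
          lt_min (h j (Finset.mem_insert_self j s'))
            (ih (fun i hi => h i (Finset.mem_insert_of_mem hi)))
        exact lt_of_lt_of_le h2 h1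
  have hbd0 : b d * a ^ d ≠ 0 := mul_ne_zero hd (pow_ne_zero d ha0)
  set c : ℕ∞ := ν (b d * a ^ d) with hc
  have hcne : c ≠ ⊤ := fun h => hbd0 ((htop _).mp h)
  have hclt : c < (c.toNat + 1 : ℕ) := by
    calc c = (c.toNat : ℕ∞) := (ENat.coe_toNat hcne).symm
      _ < ((c.toNat + 1 : ℕ) : ℕ∞) := by exact_mod_cast Nat.lt_succ_self _
  have hadne : ν (a ^ d) ≠ ⊤ := fun h => pow_ne_zero d ha0 ((htop _).mp h)
  -- key bound for i > d
  have hkey : ∀ i, d < i → c < ν (b i * a ^ i) := by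
    intro i hi
    have hpow : a ^ i = a ^ d * a * a ^ (i - (d + 1)) := by
      rw [mul_assoc, ← pow_succ', ← pow_add]
      congr 1
      omega
    have h1 : ν (b i * a ^ i) = ν (b i) + (ν (a ^ d) + ν a + ν (a ^ (i - (d + 1)))) := by
      rw [hmul, hpow, hmul, hmul]
    have h2 : ν (a ^ d) + ν a ≤ ν (b i * a ^ i) := by
      rw [h1]
      calc ν (a ^ d) + ν a ≤ ν (a ^ d) + ν a + ν (a ^ (i - (d + 1))) := le_self_add
        _ ≤ _ := le_add_self
    have h3 : c < ν (a ^ d) + ν a := by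
      rw [hc, hmul, add_comm]
      exact (WithTop.add_lt_add_iff_left hadne).mpr hva
    exact lt_of_lt_of_le h3 h2
  -- choose m from compatibility
  obtain ⟨m, hm⟩ := hcompat.1 (c.toNat + 1)
  set ℓ : ℕ := max m (d + 1) with hℓ
  set r : Λ := x - ∑ i ∈ Finset.range ℓ, b i * a ^ i with hr
  have hrmem : r ∈ (IsLocalRing.maximalIdeal Λ) ^ m := by
    have := hx ℓ
    exact Ideal.pow_le_pow_right (le_max_left m (d + 1)) this
  have hrν : c < ν r := lt_of_lt_of_le hclt (hm r hrmem)
  have hdmem : d ∈ Finset.range ℓ := Finset.mem_range.mpr (by omega)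
  have hsplit : ∑ i ∈ Finset.range ℓ, b i * a ^ i
      = b d * a ^ d + ∑ i ∈ (Finset.range ℓ).erase d, b i * a ^ i :=
    (Finset.add_sum_erase _ _ hdmem).symm
  set y : Λ := (∑ i ∈ (Finset.range ℓ).erase d, b i * a ^ i) + r with hy
  have hxy : x = b d * a ^ d + y := by
    rw [hy, hr, hsplit]; ring
  have hyν : c < ν y := by
    have h1 : c < ν (∑ i ∈ (Finset.range ℓ).erase d, b i * a ^ i) := by
      apply hsum _ _ _ hcne
      intro i hi
      rcases Finset.mem_erase.mp hi with ⟨hne, hmem⟩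
      rcases lt_or_gt_of_ne hne with h | h
      · have hbi : b i = 0 := hdmin i h
        rw [hbi, zero_mul, (htop 0).mpr rfl]
        exact lt_top_iff_ne_top.mpr hcne
      · exact hkey i h
    have h2 := hadd (∑ i ∈ (Finset.range ℓ).erase d, b i * a ^ i) r
    exact lt_of_lt_of_le (lt_min h1 hrν) h2
  have hle : c ≤ ν x := by
    rw [hxy]
    exact le_trans (le_min le_rfl hyν.le) (hadd _ _)
  have hge : ν x ≤ c := by
    by_contra h
    push_neg at h
    have heq : b d * a ^ d = x + -y := by rw [hxy]; ring
    have := hadd x (-y)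
    rw [← heq, hνneg, ← hc] at this
    exact absurd (lt_of_lt_of_le (lt_min h hyν) this) (lt_irrefl c)
  refine ⟨le_antisymm hge hle, fun h0 => ?_⟩
  rw [h0, (htop 0).mpr rfl] at hge
  exact hcne (top_le_iff.mp hge)
end

section
/- Let Λ be a Noetherian complete local ring with residue field k, F : Art_Λ → Set a deformation functor, and R ∈ Comp_Λ a hull for F. Then R ⊗_Λ k is a hull for the restricted functor F₀ = F|_{Art_k} : Art_k → Set. -/
universe u v

variable (Λ : Type) [CommRing Λ] [IsLocalRing Λ]

/-- An object of the category `Art_Λ`: an Artinian local `Λ`-algebra whose residue field is the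
residue field `k` of `Λ` (the composite `Λ → A → A/𝔪_A` is surjective with kernel `𝔪_Λ`;
in particular the structure morphism is local). -/
structure ArtinAlgebra where
  carrier : Type u
  [commRing : CommRing carrier]
  [algebra : Algebra Λ carrier]
  [artinian : IsArtinianRing carrier]
  [localRing : IsLocalRing carrier]
  residue_surjective :
    Function.Surjective ((IsLocalRing.residue carrier).comp (algebraMap Λ carrier))
  ker_residue :
    RingHom.ker ((IsLocalRing.residue carrier).comp (algebraMap Λ carrier)) =
      IsLocalRing.maximalIdeal Λ

attribute [instance] ArtinAlgebra.commRing ArtinAlgebra.algebra ArtinAlgebra.artinian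
  ArtinAlgebra.localRing

/-- A set-valued functor on `Art_Λ` (morphisms are `Λ`-algebra homomorphisms; these are
automatically local and compatible with the projections to the residue field). -/
structure ArtFunctor where
  obj : ArtinAlgebra.{u} Λ → Type v
  map : ∀ {A B : ArtinAlgebra.{u} Λ}, (A.carrier →ₐ[Λ] B.carrier) → obj A → obj B
  map_id : ∀ A : ArtinAlgebra.{u} Λ, map (AlgHom.id Λ A.carrier) = id
  map_comp : ∀ {A B C : ArtinAlgebra.{u} Λ} (f : A.carrier →ₐ[Λ] B.carrier)
    (g : B.carrier →ₐ[Λ] C.carrier), map (g.comp f) = map g ∘ map f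

variable {Λ}

/-- A small surjection in `Art_Λ`: a surjective homomorphism whose kernel is principal and
annihilated by the maximal ideal. -/
def IsSmallSurjection {B A : ArtinAlgebra.{u} Λ} (p : B.carrier →ₐ[Λ] A.carrier) : Prop :=
  Function.Surjective p ∧ (∃ t : B.carrier, RingHom.ker p.toRingHom = Ideal.span {t}) ∧
    RingHom.ker p.toRingHom * IsLocalRing.maximalIdeal B.carrier = ⊥

/-- `(P, pB, pC)` is the fiber product `B ×_A C` of `f : B → A` and `g : C → A`:
set-theoretically, `pB` and `pC` identify `P` with `{(b,c) | f b = g c}`. -/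
def IsFiberProduct {A B C P : ArtinAlgebra.{u} Λ} (f : B.carrier →ₐ[Λ] A.carrier)
    (g : C.carrier →ₐ[Λ] A.carrier) (pB : P.carrier →ₐ[Λ] B.carrier)
    (pC : P.carrier →ₐ[Λ] C.carrier) : Prop :=
  (∀ x, f (pB x) = g (pC x)) ∧
  (∀ x y : P.carrier, pB x = pB y → pC x = pC y → x = y) ∧
  (∀ (b : B.carrier) (c : C.carrier), f b = g c → ∃ x : P.carrier, pB x = b ∧ pC x = c)

/-- `A` belongs to the subcategory `Art_k ⊆ Art_Λ`: the maximal ideal of `Λ` acts by zero,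
i.e. `A` is a `k`-algebra. -/
def InArtK (A : ArtinAlgebra.{u} Λ) : Prop :=
  ∀ x ∈ IsLocalRing.maximalIdeal Λ, algebraMap Λ A.carrier x = 0

/-- `A` is (isomorphic to) the ring of dual numbers `k[t]/(t²)` over the residue field:
a `k`-algebra object whose maximal ideal is generated by a single non-zero square-zero
element. -/
def IsDualNumbersObject (A : ArtinAlgebra.{u} Λ) : Prop :=
  InArtK A ∧ ∃ e : A.carrier, e ≠ 0 ∧ e * e = 0 ∧
    IsLocalRing.maximalIdeal A.carrier = Ideal.span {e}

/-- Schlessinger's condition (H1), restricted to the full subcategory of objects satisfying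
`P`: for every fiber product `B ×_A C` with `C → A` a small surjection, the natural map
`F(B ×_A C) → F(B) ×_{F(A)} F(C)` is surjective. -/
def SatisfiesH1On (F : ArtFunctor.{u, v} Λ) (Pr : ArtinAlgebra.{u} Λ → Prop) : Prop :=
  ∀ (A B C P : ArtinAlgebra.{u} Λ), Pr A → Pr B → Pr C → Pr P →
    ∀ (f : B.carrier →ₐ[Λ] A.carrier) (g : C.carrier →ₐ[Λ] A.carrier)
      (pB : P.carrier →ₐ[Λ] B.carrier) (pC : P.carrier →ₐ[Λ] C.carrier),
      IsFiberProduct f g pB pC → IsSmallSurjection g →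
      ∀ (b : F.obj B) (c : F.obj C), F.map f b = F.map g c →
        ∃ x : F.obj P, F.map pB x = b ∧ F.map pC x = c

/-- Schlessinger's condition (H2), restricted to objects satisfying `P`: for a fiber product
`B ×_A C` with `A = k` and `C = k[t]/(t²)`, the natural map
`F(B ×_A C) → F(B) ×_{F(A)} F(C)` is bijective. -/
def SatisfiesH2On (F : ArtFunctor.{u, v} Λ) (Pr : ArtinAlgebra.{u} Λ → Prop) : Prop :=
  ∀ (A B C P : ArtinAlgebra.{u} Λ), Pr A → Pr B → Pr C → Pr P →
    IsField A.carrier → IsDualNumbersObject C →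
    ∀ (f : B.carrier →ₐ[Λ] A.carrier) (g : C.carrier →ₐ[Λ] A.carrier)
      (pB : P.carrier →ₐ[Λ] B.carrier) (pC : P.carrier →ₐ[Λ] C.carrier),
      IsFiberProduct f g pB pC →
      (∀ (b : F.obj B) (c : F.obj C), F.map f b = F.map g c →
        ∃ x : F.obj P, F.map pB x = b ∧ F.map pC x = c) ∧
      (∀ x y : F.obj P, F.map pB x = F.map pB y → F.map pC x = F.map pC y → x = y)

/-- `F` is a deformation functor on the full subcategory of objects satisfying `P`:
`F(k)` is a singleton and `F` satisfies Schlessinger's conditions (H1) and (H2). -/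
def IsDeformationFunctorOn (F : ArtFunctor.{u, v} Λ) (Pr : ArtinAlgebra.{u} Λ → Prop) :
    Prop :=
  (∀ A : ArtinAlgebra.{u} Λ, Pr A → IsField A.carrier →
    Nonempty (F.obj A) ∧ Subsingleton (F.obj A)) ∧
  SatisfiesH1On F Pr ∧ SatisfiesH2On F Pr

open scoped TensorProduct

/-- `R` (an object of `Comp_Λ`: a Noetherian complete local `Λ`-algebra with residue field
`k`) is a hull for the restriction of `F` to the subcategory of objects satisfying `Pr`:
there is a smooth natural transformation `h_R = Hom_Λ(R, −) → F` inducing a bijection on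
tangent spaces. -/
def IsHullOn (R : Type) [CommRing R] [Algebra Λ R] (F : ArtFunctor.{u, v} Λ)
    (Pr : ArtinAlgebra.{u} Λ → Prop) : Prop :=
  IsNoetherianRing R ∧
  (∃ _h : IsLocalRing R,
    IsAdicComplete (IsLocalRing.maximalIdeal R) R ∧
    Function.Surjective ((IsLocalRing.residue R).comp (algebraMap Λ R)) ∧
    RingHom.ker ((IsLocalRing.residue R).comp (algebraMap Λ R)) =
      IsLocalRing.maximalIdeal Λ) ∧
  ∃ η : ∀ A : ArtinAlgebra.{u} Λ, Pr A → (R →ₐ[Λ] A.carrier) → F.obj A,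
    (∀ (A B : ArtinAlgebra.{u} Λ) (hA : Pr A) (hB : Pr B)
      (f : A.carrier →ₐ[Λ] B.carrier) (φ : R →ₐ[Λ] A.carrier),
        η B hB (f.comp φ) = F.map f (η A hA φ)) ∧
    (∀ (A B : ArtinAlgebra.{u} Λ) (hA : Pr A) (hB : Pr B)
      (p : B.carrier →ₐ[Λ] A.carrier), Function.Surjective p →
      ∀ (φ : R →ₐ[Λ] A.carrier) (y : F.obj B), F.map p y = η A hA φ →
        ∃ ψ : R →ₐ[Λ] B.carrier, p.comp ψ = φ ∧ η B hB ψ = y) ∧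
    (∀ (A : ArtinAlgebra.{u} Λ) (hA : Pr A), IsDualNumbersObject A →
      Function.Bijective (η A hA))

section Aux

open IsLocalRing TensorProduct

variable {Λ' : Type} [CommRing Λ'] [IsLocalRing Λ']
variable (R' : Type) [CommRing R'] [Algebra Λ' R']

/-- The canonical map `R → R ⊗ k` is surjective. -/
lemma aux_includeLeft_surjective :
    Function.Surjective
      (Algebra.TensorProduct.includeLeft :
        R' →ₐ[Λ'] R' ⊗[Λ'] IsLocalRing.ResidueField Λ') := by
  intro x
  induction x using TensorProduct.induction_on with
  | zero => exact ⟨0, map_zero _⟩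
  | tmul a b =>
      obtain ⟨l, rfl⟩ := Ideal.Quotient.mk_surjective b
      refine ⟨l • a, ?_⟩
      show (l • a) ⊗ₜ[Λ'] (1 : ResidueField Λ') = _
      rw [TensorProduct.smul_tmul]
      congr 1
      rw [← Algebra.algebraMap_eq_smul_one]
      rfl
  | add x y hx hy =>
      obtain ⟨a, rfl⟩ := hx
      obtain ⟨b, rfl⟩ := hy
      exact ⟨a + b, map_add _ _ _⟩

/-- Any `Λ`-algebra map `R → A` with `A ∈ Art_k` extends along `R → R ⊗ k`. -/
lemma aux_exists_extend {A : Type u} [CommRing A] [Algebra Λ' A]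
    (hA : ∀ x ∈ IsLocalRing.maximalIdeal Λ', algebraMap Λ' A x = 0)
    (ψ : R' →ₐ[Λ'] A) :
    ∃ φ : R' ⊗[Λ'] IsLocalRing.ResidueField Λ' →ₐ[Λ'] A,
      φ.comp Algebra.TensorProduct.includeLeft = ψ :=
  ⟨Algebra.TensorProduct.lift ψ
      (Ideal.Quotient.liftₐ (maximalIdeal Λ') (Algebra.ofId Λ' A) hA)
      (fun _ _ => Commute.all _ _),
    Algebra.TensorProduct.lift_comp_includeLeft _ _ _⟩

end Aux

/-- Let `Λ` be a Noetherian complete local ring with residue field `k`, let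
`F : Art_Λ → Set` be a deformation functor, and let `R ∈ Comp_Λ` be a hull for `F`.  Then
`R ⊗_Λ k` is a hull for the restricted functor `F₀ = F|_{Art_k}`. -/
theorem tensor_residueField_isHull_of_restriction
    {Λ : Type} [CommRing Λ] [IsLocalRing Λ] [IsNoetherianRing Λ]
    (hcomplete : IsAdicComplete (IsLocalRing.maximalIdeal Λ) Λ)
    (F : ArtFunctor.{u, v} Λ)
    (hF : IsDeformationFunctorOn F (fun _ => True))
    (R : Type) [CommRing R] [Algebra Λ R]
    (hR : IsHullOn R F (fun _ => True)) :
    IsHullOn (R ⊗[Λ] IsLocalRing.ResidueField Λ) F (InArtK (Λ := Λ)) := by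
  classical
  obtain ⟨hNoeR, ⟨hLocR, hComR, hSurR, hKerR⟩, η, hnat, hsm, htan⟩ := hR
  haveI := hNoeR
  haveI := hLocR
  set k := IsLocalRing.ResidueField Λ with hk
  set S := R ⊗[Λ] k with hS
  let ι : R →ₐ[Λ] S := Algebra.TensorProduct.includeLeft
  have hι : Function.Surjective ι := aux_includeLeft_surjective R
  -- A ring hom from `S` to the residue field of `R`, showing `S` is nontrivial
  have hkerres : ∀ a ∈ IsLocalRing.maximalIdeal Λ,
      (Algebra.ofId Λ (IsLocalRing.ResidueField R)) a = 0 := by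
    intro a ha
    have : ((IsLocalRing.residue R).comp (algebraMap Λ R)) a = 0 := by
      rw [← RingHom.mem_ker, hKerR]; exact ha
    simpa [Algebra.ofId_apply, IsScalarTower.algebraMap_apply Λ R
      (IsLocalRing.ResidueField R)] using this
  let φ₀ : S →ₐ[Λ] IsLocalRing.ResidueField R :=
    Algebra.TensorProduct.lift (IsScalarTower.toAlgHom Λ R (IsLocalRing.ResidueField R))
      (Ideal.Quotient.liftₐ (IsLocalRing.maximalIdeal Λ)
        (Algebra.ofId Λ (IsLocalRing.ResidueField R)) hkerres)
      (fun _ _ => Commute.all _ _)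
  haveI : Nontrivial S := φ₀.toRingHom.domain_nontrivial
  haveI hLocS : IsLocalRing S := IsLocalRing.of_surjective' ι.toRingHom hι
  haveI hNoeS : IsNoetherianRing S :=
    isNoetherianRing_of_surjective R S ι.toRingHom hι
  haveI : IsLocalHom ι.toRingHom := IsLocalHom.of_surjective ι.toRingHom hι
  -- the maximal ideal of `S` is the image of the maximal ideal of `R`
  have hcomap : (IsLocalRing.maximalIdeal S).comap ι.toRingHom =
      IsLocalRing.maximalIdeal R := by
    haveI := Ideal.comap_isMaximal_of_surjective ι.toRingHom hι
      (K := IsLocalRing.maximalIdeal S)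
    exact (IsLocalRing.eq_maximalIdeal this)
  have hmap : (IsLocalRing.maximalIdeal R).map ι.toRingHom =
      IsLocalRing.maximalIdeal S := by
    rw [← hcomap]
    exact Ideal.map_comap_of_surjective ι.toRingHom hι _
  have hmappow : ∀ n : ℕ, ((IsLocalRing.maximalIdeal R) ^ n).map ι.toRingHom =
      (IsLocalRing.maximalIdeal S) ^ n := by
    intro n; rw [Ideal.map_pow, hmap]
  have hmem : ∀ (n : ℕ) (y : S), y ∈ (IsLocalRing.maximalIdeal S) ^ n →
      ∃ x ∈ (IsLocalRing.maximalIdeal R) ^ n, ι x = y := by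
    intro n y hy
    rw [← hmappow n] at hy
    exact (Ideal.mem_map_iff_of_surjective ι.toRingHom hι).mp hy
  have hsmultop : ∀ (T : Type) (_ : CommRing T) (I : Ideal T),
      (I • (⊤ : Submodule T T)) = I := by
    intro T _ I; rw [smul_eq_mul, Ideal.mul_top]
  refine ⟨hNoeS, ⟨hLocS, ?_, ?_, ?_⟩, ?_⟩
  · -- adic completeness
    have h1 : IsHausdorff (IsLocalRing.maximalIdeal S) S := by
      refine ⟨fun x hx => ?_⟩
      have hx' : x ∈ ⨅ n : ℕ, (IsLocalRing.maximalIdeal S) ^ n := by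
        rw [Submodule.mem_iInf]
        intro n
        have := SModEq.sub_mem.mp (hx n)
        rw [sub_zero, hsmultop] at this
        exact this
      rwa [Ideal.iInf_pow_eq_bot_of_isLocalRing _
        (Ideal.IsMaximal.ne_top (IsLocalRing.maximalIdeal.isMaximal S)),
        Submodule.mem_bot] at hx'
    have h2 : IsPrecomplete (IsLocalRing.maximalIdeal S) S := by
      refine ⟨fun f hf => ?_⟩
      have key : ∀ n : ℕ, ∃ d : R, d ∈ (IsLocalRing.maximalIdeal R) ^ n ∧
          ι d = f (n + 1) - f n := by
        intro n
        have h1 : f n ≡ f (n + 1) [SMOD ((IsLocalRing.maximalIdeal S) ^ n •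
            (⊤ : Submodule S S))] := hf (Nat.le_succ n)
        have h2 : f (n + 1) - f n ∈ (IsLocalRing.maximalIdeal S) ^ n := by
          have := SModEq.sub_mem.mp h1.symm
          rwa [hsmultop] at this
        obtain ⟨d, hd, hd2⟩ := hmem n _ h2
        exact ⟨d, hd, hd2⟩
      choose d hd1 hd2 using key
      obtain ⟨g0, hg0⟩ := hι (f 0)
      let g : ℕ → R := fun n => Nat.rec g0 (fun m gm => gm + d m) n
      have hgsucc : ∀ n, g (n + 1) = g n + d n := fun n => rfl
      have hg : ∀ n, ι (g n) = f n := by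
        intro n
        induction n with
        | zero => exact hg0
        | succ m ih => rw [hgsucc, map_add, ih, hd2]; ring
      have hcauchy : ∀ {m n : ℕ}, m ≤ n →
          g m ≡ g n [SMOD ((IsLocalRing.maximalIdeal R) ^ m •
            (⊤ : Submodule R R))] := by
        intro m n hmn
        induction n, hmn using Nat.le_induction with
        | base => rfl
        | succ n hmn ih =>
          refine ih.trans ?_
          rw [SModEq.sub_mem, hsmultop, hgsucc]
          have : g n - (g n + d n) = -(d n) := by ring
          rw [this]
          exact neg_mem (Ideal.pow_le_pow_right hmn (hd1 n))
      obtain ⟨L, hL⟩ := hComR.toIsPrecomplete.prec hcauchy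
      refine ⟨ι L, fun n => ?_⟩
      rw [SModEq.sub_mem, hsmultop]
      have h3 : g n - L ∈ (IsLocalRing.maximalIdeal R) ^ n := by
        have := SModEq.sub_mem.mp (hL n)
        rwa [hsmultop] at this
      have : f n - ι L = ι (g n - L) := by rw [map_sub, hg]
      rw [this, ← hmappow n]
      exact Ideal.mem_map_of_mem _ h3
    exact { toIsHausdorff := h1, toIsPrecomplete := h2 }
  · -- residue surjectivity
    have hq : Function.Surjective ((IsLocalRing.residue S).comp ι.toRingHom) := by
      intro z
      obtain ⟨s, rfl⟩ := IsLocalRing.residue_surjective (R := S) z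
      obtain ⟨r, rfl⟩ := hι s
      exact ⟨r, rfl⟩
    have hqker : ∀ x ∈ IsLocalRing.maximalIdeal R,
        ((IsLocalRing.residue S).comp ι.toRingHom) x = 0 := by
      intro x hx
      have : ι x ∈ IsLocalRing.maximalIdeal S := hmap ▸ Ideal.mem_map_of_mem _ hx
      simpa [RingHom.mem_ker, IsLocalRing.ker_residue] using this
    intro z
    obtain ⟨r, hr⟩ := hq z
    obtain ⟨l, hl⟩ := hSurR (IsLocalRing.residue R r)
    refine ⟨l, ?_⟩
    have hcomm : ∀ x : Λ, (algebraMap Λ S) x = ι ((algebraMap Λ R) x) :=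
      fun x => (ι.commutes x).symm
    have key : ∀ a : R, (IsLocalRing.residue S) (ι a) =
        Ideal.Quotient.lift (IsLocalRing.maximalIdeal R)
          ((IsLocalRing.residue S).comp ι.toRingHom) hqker
          (IsLocalRing.residue R a) := fun a => rfl
    rw [RingHom.comp_apply, hcomm, key, ← hr]
    have : (IsLocalRing.residue R) ((algebraMap Λ R) l) = IsLocalRing.residue R r := hl
    rw [this]
    rfl
  · -- kernel of residue map
    have hqker : ∀ x ∈ IsLocalRing.maximalIdeal R,
        ((IsLocalRing.residue S).comp ι.toRingHom) x = 0 := by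
      intro x hx
      have : ι x ∈ IsLocalRing.maximalIdeal S := hmap ▸ Ideal.mem_map_of_mem _ hx
      simpa [RingHom.mem_ker, IsLocalRing.ker_residue] using this
    letI : Field (R ⧸ IsLocalRing.maximalIdeal R) := Ideal.Quotient.field _
    have hinj : Function.Injective
        (Ideal.Quotient.lift (IsLocalRing.maximalIdeal R)
          ((IsLocalRing.residue S).comp ι.toRingHom) hqker) :=
      RingHom.injective _
    ext x
    constructor
    · intro hx
      rw [RingHom.mem_ker] at hx
      have hcomm : (algebraMap Λ S) x = ι ((algebraMap Λ R) x) := (ι.commutes x).symm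
      have : Ideal.Quotient.lift (IsLocalRing.maximalIdeal R)
          ((IsLocalRing.residue S).comp ι.toRingHom) hqker
          (IsLocalRing.residue R ((algebraMap Λ R) x)) = 0 := by
        rw [← hx, RingHom.comp_apply, hcomm]; rfl
      have h0 : IsLocalRing.residue R ((algebraMap Λ R) x) = 0 :=
        hinj (by rw [this]; exact (map_zero _).symm)
      rw [← hKerR, RingHom.mem_ker]; exact h0
    · intro hx
      rw [← hKerR, RingHom.mem_ker] at hx
      rw [RingHom.mem_ker, RingHom.comp_apply]
      have hcomm : (algebraMap Λ S) x = ι ((algebraMap Λ R) x) := (ι.commutes x).symm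
      rw [hcomm]
      have hxm : (algebraMap Λ R) x ∈ IsLocalRing.maximalIdeal R := by
        rw [← IsLocalRing.ker_residue, RingHom.mem_ker]; exact hx
      exact hqker _ hxm
  · -- the natural transformation
    have hcompinj : ∀ (A : ArtinAlgebra.{u} Λ) (φ₁ φ₂ : S →ₐ[Λ] A.carrier),
        φ₁.comp ι = φ₂.comp ι → φ₁ = φ₂ := by
      intro A φ₁ φ₂ h
      refine AlgHom.ext fun x => ?_
      obtain ⟨r, rfl⟩ := hι x
      exact AlgHom.congr_fun h r
    refine ⟨fun A _ φ => η A trivial (φ.comp ι), ?_, ?_, ?_⟩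
    · intro A B hA hB f φ
      show η B trivial ((f.comp φ).comp ι) = F.map f (η A trivial (φ.comp ι))
      rw [AlgHom.comp_assoc]
      exact hnat A B trivial trivial f (φ.comp ι)
    · intro A B hA hB p hp φ y hy
      replace hy : F.map p y = η A trivial (φ.comp ι) := hy
      obtain ⟨ψ', hψ'1, hψ'2⟩ := hsm A B trivial trivial p hp (φ.comp ι) y hy
      obtain ⟨ψ, hψ⟩ := aux_exists_extend R hB ψ'
      refine ⟨ψ, ?_, ?_⟩
      · apply hcompinj
        rw [AlgHom.comp_assoc, hψ, hψ'1]
      · show η B trivial (ψ.comp ι) = y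
        rw [hψ, hψ'2]
    · intro A hA hdual
      have hb := htan A trivial hdual
      constructor
      · intro φ₁ φ₂ h
        exact hcompinj A φ₁ φ₂ (hb.injective h)
      · intro y
        obtain ⟨ψ', hψ'⟩ := hb.surjective y
        obtain ⟨φ, hφ⟩ := aux_exists_extend R hA ψ'
        refine ⟨φ, ?_⟩
        show η A trivial (φ.comp Algebra.TensorProduct.includeLeft) = y
        rw [hφ, hψ']
end

section
/- Let V be a dg vector space over a field k of characteristic 0 and W ⊆ V a sub-dg-vector space whose inclusion is injective on cohomology. Then the inclusion of the sub-dgla H = {m ∈ Hom_k^•(V,V) : m(W) ⊆ W} into M = Hom_k^•(V,V) is injective on cohomology. -/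
universe u

/-- A differential graded vector space over a field `k`: a `ℤ`-graded vector space (internal
direct sum decomposition) with a differential `d` of degree `+1` squaring to zero. -/
structure DGVS (k : Type) [Field k] where
  carrier : Type u
  [acg : AddCommGroup carrier]
  [mod : Module k carrier]
  grading : ℤ → Submodule k carrier
  isInternal : DirectSum.IsInternal grading
  d : carrier →ₗ[k] carrier
  d_mem : ∀ (i : ℤ), ∀ a ∈ grading i, d a ∈ grading (i + 1)
  d_sq : ∀ a, d (d a) = 0

attribute [instance] DGVS.acg DGVS.mod

variable {k : Type} [Field k]

/-- A linear map `V → W` is homogeneous of degree `n` if it raises degrees by `n`. -/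
def HomogOfDegree (V W : DGVS.{u} k) (n : ℤ) (φ : V.carrier →ₗ[k] W.carrier) : Prop :=
  ∀ (i : ℤ), ∀ x ∈ V.grading i, φ x ∈ W.grading (i + n)

/-- The differential of the Hom-complex `Hom_k^•(V, W)` on elements of degree `n`:
`δ(φ) = d_W ∘ φ − (−1)^n φ ∘ d_V`. -/
noncomputable def homDelta (V W : DGVS.{u} k) (n : ℤ) (φ : V.carrier →ₗ[k] W.carrier) :
    V.carrier →ₗ[k] W.carrier :=
  W.d ∘ₗ φ - (Int.negOnePow n : ℤ) • (φ ∘ₗ V.d)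

lemma exists_relCompl {M : Type u} [AddCommGroup M] [Module k M] (p q : Submodule k M)
    (hpq : p ≤ q) : ∃ r : Submodule k M, r ≤ q ∧ p ⊓ r = ⊥ ∧ p ⊔ r = q := by
  obtain ⟨c, hc⟩ := Submodule.exists_isCompl (p.comap q.subtype)
  have hp : (p.comap q.subtype).map q.subtype = p := by
    rw [Submodule.map_comap_subtype, inf_eq_right.mpr hpq]
  refine ⟨c.map q.subtype, Submodule.map_subtype_le _ _, ?_, ?_⟩
  · rw [eq_bot_iff]
    rintro x ⟨hxp, hxc⟩
    obtain ⟨y, hyc, rfl⟩ := hxc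
    have hy : y ∈ (p.comap q.subtype) ⊓ c := ⟨hxp, hyc⟩
    rw [hc.inf_eq_bot] at hy
    simpa using hy
  · rw [← hp, ← Submodule.map_sup, hc.sup_eq_top, Submodule.map_subtype_top]

lemma exists_complExtend {M : Type u} [AddCommGroup M] [Module k M] (p q : Submodule k M)
    (h : p ⊓ q = ⊥) : ∃ Q : Submodule k M, q ≤ Q ∧ IsCompl p Q := by
  obtain ⟨c, hc⟩ := Submodule.exists_isCompl (p ⊔ q)
  refine ⟨q ⊔ c, le_sup_left, ?_, ?_⟩
  · rw [disjoint_iff, eq_bot_iff]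
    rintro x ⟨hxp, hxqc⟩
    obtain ⟨y, hy, z, hz, rfl⟩ := Submodule.mem_sup.mp (hxqc : _ ∈ q ⊔ c)
    have hz0 : z ∈ (p ⊔ q) ⊓ c := ⟨by
      have : z = (y + z) - y := by abel
      rw [this]
      exact Submodule.sub_mem _ (Submodule.mem_sup_left hxp) (Submodule.mem_sup_right hy), hz⟩
    rw [hc.inf_eq_bot] at hz0
    simp only [Submodule.mem_bot] at hz0
    subst hz0
    have : y + 0 ∈ p ⊓ q := ⟨hxp, by simpa using hy⟩
    rw [h] at this
    simpa using this
  · rw [codisjoint_iff, ← sup_assoc, hc.sup_eq_top]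

lemma exists_ungraded_retraction (V : DGVS.{u} k) (W : Submodule k V.carrier)
    (hWd : ∀ x ∈ W, V.d x ∈ W)
    (key : LinearMap.range V.d ⊓ (LinearMap.ker V.d ⊓ W) ≤ Submodule.map V.d W) :
    ∃ r : Module.End k V.carrier, (∀ x, r x ∈ W) ∧ (∀ x ∈ W, r x = x) ∧
      (∀ x, r (V.d x) = V.d (r x)) := by
  classical
  set Z := LinearMap.ker V.d with hZ
  set B := LinearMap.range V.d with hB
  set ZW := Z ⊓ W with hZW
  set BW := Submodule.map V.d W with hBW
  have hBZ : B ≤ Z := by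
    rintro x ⟨y, rfl⟩
    exact LinearMap.mem_ker.mpr (V.d_sq y)
  have hBWB : BW ≤ B := by
    rintro x ⟨y, _, rfl⟩
    exact ⟨y, rfl⟩
  have hBWZW : BW ≤ ZW := by
    rintro x ⟨y, hy, rfl⟩
    exact ⟨LinearMap.mem_ker.mpr (V.d_sq y), hWd y hy⟩
  obtain ⟨HW, hHWle, hHWinf, hHWsup⟩ := exists_relCompl BW ZW hBWZW
  obtain ⟨AW, hAWle, hAWinf, hAWsup⟩ := exists_relCompl ZW W inf_le_right
  have hAWZ : Z ⊓ AW = ⊥ := by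
    rw [eq_bot_iff]
    rintro x ⟨hxZ, hxAW⟩
    rw [← hAWinf]
    exact ⟨⟨hxZ, hAWle hxAW⟩, hxAW⟩
  obtain ⟨A, hAWA, hcA⟩ := exists_complExtend Z AW hAWZ
  -- Q1 : complement of BW containing HW ⊔ A
  have hBWdisj : BW ⊓ (HW ⊔ A) = ⊥ := by
    rw [eq_bot_iff]
    rintro x ⟨hxBW, hxHA⟩
    obtain ⟨h, hh, a, ha, rfl⟩ := Submodule.mem_sup.mp (hxHA : _ ∈ HW ⊔ A)
    have haZ : a ∈ Z ⊓ A := ⟨by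
      have : a = (h + a) - h := by abel
      rw [this]
      exact Submodule.sub_mem _ (hBZ (hBWB hxBW)) ((hHWle hh).1), ha⟩
    rw [hcA.inf_eq_bot] at haZ
    simp only [Submodule.mem_bot] at haZ
    subst haZ
    have : h + 0 ∈ BW ⊓ HW := ⟨hxBW, by simpa using hh⟩
    rw [hHWinf] at this
    simpa using this
  obtain ⟨Q1, hQ1le, hcQ1⟩ := exists_complExtend BW (HW ⊔ A) hBWdisj
  -- Q2 : complement of HW containing B ⊔ A
  have hHWB : HW ⊓ B = ⊥ := by
    rw [eq_bot_iff]
    rintro x ⟨hxHW, hxB⟩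
    have hxBW : x ∈ BW := key ⟨hxB, hHWle hxHW⟩
    have : x ∈ BW ⊓ HW := ⟨hxBW, hxHW⟩
    rw [hHWinf] at this
    exact this
  have hHWdisj : HW ⊓ (B ⊔ A) = ⊥ := by
    rw [eq_bot_iff]
    rintro x ⟨hxHW, hxBA⟩
    obtain ⟨b, hb, a, ha, rfl⟩ := Submodule.mem_sup.mp (hxBA : _ ∈ B ⊔ A)
    have haZ : a ∈ Z ⊓ A := ⟨by
      have : a = (b + a) - b := by abel
      rw [this]
      exact Submodule.sub_mem _ ((hHWle hxHW).1) (hBZ hb), ha⟩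
    rw [hcA.inf_eq_bot] at haZ
    simp only [Submodule.mem_bot] at haZ
    subst haZ
    have : b + 0 ∈ HW ⊓ B := ⟨hxHW, by simpa using hb⟩
    rw [hHWB] at this
    simpa using this
  obtain ⟨Q2, hQ2le, hcQ2⟩ := exists_complExtend HW (B ⊔ A) hHWdisj
  set projBW := Submodule.linearProjOfIsCompl BW Q1 hcQ1 with hprojBW
  set projHW := Submodule.linearProjOfIsCompl HW Q2 hcQ2 with hprojHW
  -- the iso AW ≃ BW induced by d
  have hdAW : ∀ x ∈ AW, V.d x ∈ BW := fun x hx => ⟨x, hAWle hx, rfl⟩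
  set f : AW →ₗ[k] BW := V.d.restrict hdAW with hf
  have hfbij : Function.Bijective f := by
    constructor
    · rw [injective_iff_map_eq_zero]
      intro a ha
      have h0 : V.d (a : V.carrier) = 0 := congrArg Subtype.val ha
      have : (a : V.carrier) ∈ ZW ⊓ AW := ⟨⟨LinearMap.mem_ker.mpr h0, hAWle a.2⟩, a.2⟩
      rw [hAWinf] at this
      exact Subtype.ext (by simpa using this)
    · rintro ⟨b, w, hw, rfl⟩
      have hw' : w ∈ ZW ⊔ AW := hAWsup ▸ hw
      obtain ⟨z, hz, a, ha, rfl⟩ := Submodule.mem_sup.mp hw'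
      refine ⟨⟨a, ha⟩, Subtype.ext ?_⟩
      have : V.d z = 0 := LinearMap.mem_ker.mp hz.1
      simp [hf, LinearMap.restrict_apply, map_add, this]
  set e := LinearEquiv.ofBijective f hfbij with he
  set r : Module.End k V.carrier :=
    BW.subtype ∘ₗ projBW + HW.subtype ∘ₗ projHW +
      AW.subtype ∘ₗ (e.symm : BW →ₗ[k] AW) ∘ₗ projBW ∘ₗ V.d with hr
  have hrapp : ∀ x, r x = (projBW x : V.carrier) + (projHW x : V.carrier) +
      ((e.symm (projBW (V.d x)) : AW) : V.carrier) := by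
    intro x; rfl
  have hde : ∀ b : BW, V.d ((e.symm b : AW) : V.carrier) = (b : V.carrier) := by
    intro b
    have : f (e.symm b) = b := e.apply_symm_apply b
    exact congrArg Subtype.val this
  have hBWW : BW ≤ W := hBWZW.trans inf_le_right
  have hHWW : HW ≤ W := hHWle.trans inf_le_right
  refine ⟨r, ?_, ?_, ?_⟩
  · intro x
    rw [hrapp]
    exact Submodule.add_mem _ (Submodule.add_mem _ (hBWW (projBW x).2) (hHWW (projHW x).2))
      (hAWle (e.symm (projBW (V.d x))).2)
  · have hsup : BW ⊔ HW ⊔ AW = W := by rw [hHWsup, hAWsup]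
    have hle : BW ⊔ HW ⊔ AW ≤ LinearMap.eqLocus r LinearMap.id := by
      refine sup_le (sup_le ?_ ?_) ?_
      · intro x hx
        rw [LinearMap.mem_eqLocus]
        have h1 : projBW x = ⟨x, hx⟩ := Submodule.linearProjOfIsCompl_apply_left hcQ1 ⟨x, hx⟩
        have h2 : projHW x = 0 := Submodule.projectionOnto_apply_of_mem_right hcQ2 (x := x)
          (hQ2le (Submodule.mem_sup_left (hBWB hx)))
        have h3 : V.d x = 0 := LinearMap.mem_ker.mp (hBZ (hBWB hx))
        rw [hrapp, h1, h2, h3]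
        simp
      · intro x hx
        rw [LinearMap.mem_eqLocus]
        have h1 : projBW x = 0 := Submodule.projectionOnto_apply_of_mem_right hcQ1 (x := x)
          (hQ1le (Submodule.mem_sup_left hx))
        have h2 : projHW x = ⟨x, hx⟩ := Submodule.linearProjOfIsCompl_apply_left hcQ2 ⟨x, hx⟩
        have h3 : V.d x = 0 := LinearMap.mem_ker.mp (hHWle hx).1
        rw [hrapp, h1, h2, h3]
        simp
      · intro x hx
        rw [LinearMap.mem_eqLocus]
        have h1 : projBW x = 0 := Submodule.projectionOnto_apply_of_mem_right hcQ1 (x := x)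
          (hQ1le (Submodule.mem_sup_right (hAWA hx)))
        have h2 : projHW x = 0 := Submodule.projectionOnto_apply_of_mem_right hcQ2 (x := x)
          (hQ2le (Submodule.mem_sup_right (hAWA hx)))
        have h3 : projBW (V.d x) = ⟨V.d x, hdAW x hx⟩ :=
          Submodule.linearProjOfIsCompl_apply_left hcQ1 ⟨V.d x, hdAW x hx⟩
        have h4 : e.symm ⟨V.d x, hdAW x hx⟩ = ⟨x, hx⟩ := by
          rw [LinearEquiv.symm_apply_eq]
          exact Subtype.ext rfl
        rw [hrapp, h1, h2, h3, h4]
        simp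
    intro x hxW
    have := hle (hsup ▸ hxW : x ∈ BW ⊔ HW ⊔ AW)
    exact LinearMap.mem_eqLocus.mp this
  · intro x
    have h2 : projHW (V.d x) = 0 := Submodule.projectionOnto_apply_of_mem_right hcQ2
      (hQ2le (Submodule.mem_sup_left ⟨x, rfl⟩))
    have h3 : V.d (V.d x) = 0 := V.d_sq x
    have hdBW : ∀ y : BW, V.d (y : V.carrier) = 0 := fun y =>
      LinearMap.mem_ker.mp (hBZ (hBWB y.2))
    have hdHW : ∀ y : HW, V.d (y : V.carrier) = 0 := fun y =>
      LinearMap.mem_ker.mp (hHWle y.2).1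
    rw [hrapp, hrapp, h2, h3, map_add, map_add, hdBW, hdHW, hde]
    simp

noncomputable def DGVS.decompE (V : DGVS.{u} k) :
    (DirectSum ℤ fun i => V.grading i) ≃ₗ[k] V.carrier :=
  LinearEquiv.ofBijective (DirectSum.coeLinearMap V.grading) V.isInternal

noncomputable def DGVS.piL (V : DGVS.{u} k) (i : ℤ) : Module.End k V.carrier :=
  (V.grading i).subtype ∘ₗ (DirectSum.component k ℤ (fun j => ↥(V.grading j)) i) ∘ₗ
    V.decompE.symm.toLinearMap

lemma piL_mem (V : DGVS.{u} k) (i : ℤ) (x : V.carrier) : V.piL i x ∈ V.grading i :=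
  ((DirectSum.component k ℤ (fun j => ↥(V.grading j)) i) (V.decompE.symm x)).2

lemma piL_same (V : DGVS.{u} k) {i : ℤ} {x : V.carrier} (hx : x ∈ V.grading i) :
    V.piL i x = x := by
  have h := V.isInternal.ofBijective_coeLinearMap_of_mem (i := i) hx
  simp only [DGVS.piL, DGVS.decompE, LinearMap.coe_comp, LinearEquiv.coe_coe,
    Function.comp_apply, Submodule.coe_subtype]
  rw [← DirectSum.apply_eq_component]
  rw [h]

lemma piL_ne (V : DGVS.{u} k) {i j : ℤ} (hij : j ≠ i) {x : V.carrier}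
    (hx : x ∈ V.grading j) : V.piL i x = 0 := by
  have h := V.isInternal.ofBijective_coeLinearMap_of_mem_ne (hij := hij) hx
  simp only [DGVS.piL, DGVS.decompE, LinearMap.coe_comp, LinearEquiv.coe_coe,
    Function.comp_apply, Submodule.coe_subtype]
  rw [← DirectSum.apply_eq_component, h]
  rfl

lemma grading_iSup_top (V : DGVS.{u} k) : ⨆ i, V.grading i = ⊤ :=
  V.isInternal.submodule_iSup_eq_top

lemma piL_d (V : DGVS.{u} k) (i : ℤ) (x : V.carrier) :
    V.piL (i + 1) (V.d x) = V.d (V.piL i x) := by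
  have htop : ⊤ ≤ LinearMap.eqLocus (V.piL (i + 1) ∘ₗ V.d) (V.d ∘ₗ V.piL i) := by
    rw [← grading_iSup_top V]
    refine iSup_le fun j => fun y hy => LinearMap.mem_eqLocus.mpr ?_
    simp only [LinearMap.comp_apply]
    by_cases hij : i = j
    · subst hij
      rw [piL_same V hy, piL_same V (V.d_mem i y hy)]
    · rw [piL_ne V (Ne.symm hij) hy, map_zero,
        piL_ne V (fun h => hij (by omega : i = j)) (V.d_mem j y hy)]
  exact LinearMap.mem_eqLocus.mp (htop trivial)

lemma piL_memW (V : DGVS.{u} k) (W : Submodule k V.carrier)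
    (hWgr : W = ⨆ i : ℤ, W ⊓ V.grading i) (i : ℤ) :
    ∀ x ∈ W, V.piL i x ∈ W := by
  have h : W ≤ W.comap (V.piL i) := by
    nth_rewrite 1 [hWgr]
    refine iSup_le fun j => fun x hx => Submodule.mem_comap.mpr ?_
    rcases eq_or_ne j i with h | h
    · subst h; rw [piL_same V hx.2]; exact hx.1
    · rw [piL_ne V h hx.2]; exact W.zero_mem
  exact fun x hx => h hx

open scoped Classical in
lemma sum_piL (V : DGVS.{u} k) (x : V.carrier) :
    x = ∑ j ∈ DFinsupp.support (V.decompE.symm x) , V.piL j x := by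
  have h1 : ∀ j, V.piL j x = ((V.decompE.symm x) j : V.carrier) := fun j => rfl
  have h3 := DirectSum.sum_support_of (V.decompE.symm x)
  calc x = V.decompE.toLinearMap (V.decompE.symm x) := (V.decompE.apply_symm_apply x).symm
    _ = V.decompE.toLinearMap (∑ j ∈ DFinsupp.support (V.decompE.symm x),
          DirectSum.of _ j ((V.decompE.symm x) j)) := by rw [h3]
    _ = ∑ j ∈ DFinsupp.support (V.decompE.symm x),
          V.decompE.toLinearMap (DirectSum.of _ j ((V.decompE.symm x) j)) := map_sum _ _ _
    _ = ∑ j ∈ DFinsupp.support (V.decompE.symm x), V.piL j x := by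
        refine Finset.sum_congr rfl fun j _ => ?_
        rw [h1]
        exact DirectSum.coeLinearMap_of _ j _

lemma key_of_hinj (V : DGVS.{u} k) (W : Submodule k V.carrier)
    (hWgr : W = ⨆ i : ℤ, W ⊓ V.grading i)
    (hinj : ∀ (i : ℤ) (x : V.carrier), x ∈ W → x ∈ V.grading i → V.d x = 0 →
      (∃ y : V.carrier, V.d y = x) → ∃ y ∈ W, V.d y = x) :
    LinearMap.range V.d ⊓ (LinearMap.ker V.d ⊓ W) ≤ Submodule.map V.d W := by
  classical
  rintro x ⟨⟨y, hy⟩, hxk, hxW⟩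
  have hdx : V.d x = 0 := hxk
  have H : ∀ j : ℤ, ∃ w, w ∈ W ∧ V.d w = V.piL j x := by
    intro j
    have h1 : V.piL j x ∈ W := piL_memW V W hWgr j x hxW
    have h2 : V.piL j x ∈ V.grading j := piL_mem V j x
    have h3 : V.d (V.piL j x) = 0 := by
      rw [← piL_d, hdx, map_zero]
    have h4 : ∃ z, V.d z = V.piL j x := by
      refine ⟨V.piL (j - 1) y, ?_⟩
      have h := piL_d V (j - 1) y
      have hj : j - 1 + 1 = j := by omega
      rw [hj] at h
      rw [← h, hy]
    obtain ⟨w, hw, hdw⟩ := hinj j _ h1 h2 h3 h4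
    exact ⟨w, hw, hdw⟩
  choose w hw hdw using H
  refine ⟨∑ j ∈ DFinsupp.support (V.decompE.symm x), w j,
    Submodule.sum_mem _ fun j _ => hw j, ?_⟩
  rw [map_sum]
  simp_rw [hdw]
  exact (sum_piL V x).symm

lemma exists_graded_retraction (V : DGVS.{u} k) (W : Submodule k V.carrier)
    (hWgr : W = ⨆ i : ℤ, W ⊓ V.grading i)
    (r : Module.End k V.carrier) (hr1 : ∀ x, r x ∈ W) (hr2 : ∀ x ∈ W, r x = x)
    (hr3 : ∀ x, r (V.d x) = V.d (r x)) :
    ∃ p : Module.End k V.carrier, (∀ i : ℤ, ∀ x ∈ V.grading i, p x ∈ V.grading i) ∧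
      (∀ x, p x ∈ W) ∧ (∀ x ∈ W, p x = x) ∧ (∀ x, p (V.d x) = V.d (p x)) := by
  classical
  set g : ∀ i : ℤ, V.grading i →ₗ[k] V.grading i := fun i =>
    (DirectSum.component k ℤ (fun j => ↥(V.grading j)) i) ∘ₗ V.decompE.symm.toLinearMap ∘ₗ
      r ∘ₗ (V.grading i).subtype with hg
  set p : Module.End k V.carrier :=
    V.decompE.toLinearMap ∘ₗ (DFinsupp.mapRange.linearMap g) ∘ₗ V.decompE.symm.toLinearMap
    with hp
  have hpapply : ∀ i : ℤ, ∀ x ∈ V.grading i, p x = V.piL i (r x) := by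
    intro i x hx
    have h1 : V.decompE.symm x = DirectSum.of (fun j => ↥(V.grading j)) i ⟨x, hx⟩ := by
      rw [LinearEquiv.symm_apply_eq]
      exact (DirectSum.coeLinearMap_of (A := V.grading) i ⟨x, hx⟩).symm
    have h2 : DFinsupp.mapRange.linearMap g (DirectSum.of (fun j => ↥(V.grading j)) i ⟨x, hx⟩)
        = DirectSum.of (fun j => ↥(V.grading j)) i (g i ⟨x, hx⟩) := by
      simp only [DirectSum.of, DFinsupp.singleAddHom_apply, DFinsupp.mapRange.linearMap_apply]
      exact DFinsupp.mapRange_single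
    have h3 : p x = V.decompE (DirectSum.of (fun j => ↥(V.grading j)) i (g i ⟨x, hx⟩)) := by
      have h0 : p x = V.decompE (DFinsupp.mapRange.linearMap g (V.decompE.symm x)) := rfl
      rw [h0, h1, h2]
    rw [h3]
    have h4 : V.decompE (DirectSum.of (fun j => ↥(V.grading j)) i (g i ⟨x, hx⟩))
        = ((g i ⟨x, hx⟩ : V.grading i) : V.carrier) := DirectSum.coeLinearMap_of _ i _
    rw [h4]
    rfl
  refine ⟨p, ?_, ?_, ?_, ?_⟩
  · intro i x hx
    rw [hpapply i x hx]
    exact piL_mem V i (r x)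
  · have htop : (⊤ : Submodule k V.carrier) ≤ W.comap p := by
      rw [← grading_iSup_top V]
      refine iSup_le fun j => fun x hx => Submodule.mem_comap.mpr ?_
      rw [hpapply j x hx]
      exact piL_memW V W hWgr j _ (hr1 x)
    exact fun x => htop trivial
  · have hW : W ≤ LinearMap.eqLocus p LinearMap.id := by
      nth_rewrite 1 [hWgr]
      refine iSup_le fun j => fun x hx => LinearMap.mem_eqLocus.mpr ?_
      rw [hpapply j x hx.2, hr2 x hx.1]
      exact piL_same V hx.2
    exact fun x hx => LinearMap.mem_eqLocus.mp (hW hx)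
  · have htop : (⊤ : Submodule k V.carrier) ≤ LinearMap.eqLocus (p ∘ₗ V.d) (V.d ∘ₗ p) := by
      rw [← grading_iSup_top V]
      refine iSup_le fun j => fun x hx => LinearMap.mem_eqLocus.mpr ?_
      simp only [LinearMap.comp_apply]
      rw [hpapply (j + 1) (V.d x) (V.d_mem j x hx), hpapply j x hx, hr3, piL_d]
    exact fun x => LinearMap.mem_eqLocus.mp (htop trivial)

/-- Let `V` be a dg vector space over a field `k` of characteristic `0` and `W ⊆ V` a
sub-dg-vector space whose inclusion is injective on cohomology.  Then the inclusion of the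
sub-dgla `H = {m ∈ Hom_k^•(V,V) : m(W) ⊆ W}` into `M = Hom_k^•(V,V)` is injective on
cohomology: every homogeneous `δ`-closed element of `H` which is a `δ`-boundary in `M` is
already the `δ`-boundary of an element of `H`. -/
theorem stabilizer_inclusion_injective_on_cohomology [CharZero k]
    (V : DGVS.{u} k) (W : Submodule k V.carrier)
    (hWd : ∀ x ∈ W, V.d x ∈ W)
    (hWgr : W = ⨆ i : ℤ, W ⊓ V.grading i)
    (hinj : ∀ (i : ℤ) (x : V.carrier), x ∈ W → x ∈ V.grading i → V.d x = 0 →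
      (∃ y : V.carrier, V.d y = x) → ∃ y ∈ W, V.d y = x) :
    ∀ (n : ℤ) (φ : Module.End k V.carrier), HomogOfDegree V V n φ → (∀ x ∈ W, φ x ∈ W) →
      homDelta V V n φ = 0 →
      (∃ ψ : Module.End k V.carrier, HomogOfDegree V V (n - 1) ψ ∧ φ = homDelta V V (n - 1) ψ) →
      ∃ ψ : Module.End k V.carrier, HomogOfDegree V V (n - 1) ψ ∧ (∀ x ∈ W, ψ x ∈ W) ∧
        φ = homDelta V V (n - 1) ψ := by
  intro n φ hφhom hφW _hclosed hexact
  obtain ⟨ψ, hψhom, hψ⟩ := hexact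
  have key := key_of_hinj V W hWgr hinj
  obtain ⟨r, hr1, hr2, hr3⟩ := exists_ungraded_retraction V W hWd key
  obtain ⟨p, hp1, hp2, hp3, hp4⟩ := exists_graded_retraction V W hWgr r hr1 hr2 hr3
  set ψ' : Module.End k V.carrier := ψ - ψ ∘ₗ p + p ∘ₗ ψ ∘ₗ p with hψ'def
  have hψ'app : ∀ x, ψ' x = ψ x - ψ (p x) + p (ψ (p x)) := fun x => rfl
  set ε : ℤ := (Int.negOnePow (n - 1) : ℤ) with hε
  have hφapp : ∀ y, φ y = V.d (ψ y) - ε • ψ (V.d y) := by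
    intro y
    rw [hψ]
    simp only [homDelta, LinearMap.sub_apply, LinearMap.smul_apply, LinearMap.comp_apply, hε]
  refine ⟨ψ', ?_, ?_, ?_⟩
  · intro i x hx
    rw [hψ'app]
    have h1 := hψhom i x hx
    have h2 : p x ∈ V.grading i := hp1 i x hx
    have h3 := hψhom i (p x) h2
    exact Submodule.add_mem _ (Submodule.sub_mem _ h1 h3) (hp1 _ _ h3)
  · intro x hx
    rw [hψ'app, hp3 x hx, sub_self, zero_add]
    exact hp2 _
  · apply LinearMap.ext
    intro x
    have goalrhs : homDelta V V (n - 1) ψ' x = V.d (ψ' x) - ε • ψ' (V.d x) := by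
      simp only [homDelta, LinearMap.sub_apply, LinearMap.smul_apply, LinearMap.comp_apply, hε]
    rw [goalrhs, hψ'app x, hψ'app (V.d x)]
    have e1 : φ x = V.d (ψ x) - ε • ψ (V.d x) := hφapp x
    have e2 : φ (p x) = V.d (ψ (p x)) - ε • ψ (V.d (p x)) := hφapp (p x)
    have e3 : p (φ (p x)) = φ (p x) := hp3 _ (hφW _ (hp2 x))
    have e4 : p (V.d x) = V.d (p x) := hp4 x
    have e5 : p (V.d (ψ (p x))) = V.d (p (ψ (p x))) := hp4 (ψ (p x))
    have e6 : p (φ (p x)) = p (V.d (ψ (p x))) - ε • p (ψ (V.d (p x))) := by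
      rw [e2, map_sub, map_zsmul]
    have e8 : V.d (ψ (p x)) - ε • ψ (V.d (p x)) = p (V.d (ψ (p x))) - ε • p (ψ (V.d (p x))) := by
      rw [← e6, e3, e2]
    have e9 : p (V.d (ψ (p x))) = V.d (ψ (p x)) - ε • ψ (V.d (p x)) + ε • p (ψ (V.d (p x))) := by
      rw [e8]
      abel
    rw [e4, map_add, map_sub, ← e5, e9, e1, smul_add, smul_sub]
    abel
end
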